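/- Density bounds for Bhattacharya geodesics: Let p₀, p₁ ∈ 𝐏 and let γ be the Bhattacharya geodesic between p₀ and p₁. Then for every s ∈ [0,1] and a.e. x ∈ Ω: min{p₀(x), p₁(x)} ≤ γ(s,x) ≤ 2·max{p₀(x), p₁(x)}. -/
import Mathlib


open MeasureTheory Real Set Filter

noncomputable section

/-- The reference measure on `Ω = (0,1)`. -/
def μΩ : Measure ℝ := volume.restrict (Set.Ioo 0 1)

/-- Membership in `𝐏`: positive a.e. probability densities on `Ω = (0,1)`. -/
def memP (p : ℝ → ℝ) : Prop :=
  Measurable p ∧ (∀ᵐ x ∂μΩ, 0 < p x) ∧ Integrable p μΩ ∧ (∫ x in Set.Ioo (0:ℝ) 1, p x) = 1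

/-- The Hellinger distance. -/
def He (p₀ p₁ : ℝ → ℝ) : ℝ :=
  Real.sqrt (∫ x in Set.Ioo (0:ℝ) 1, (Real.sqrt (p₁ x) - Real.sqrt (p₀ x))^2)

/-- The Bhattacharya distance. -/
def Bh (p₀ p₁ : ℝ → ℝ) : ℝ := 2 * Real.arcsin (He p₀ p₁ / 2)

/-- The reparametrization `t(s)` of the Bhattacharya geodesic. -/
def tgeo (δ s : ℝ) : ℝ :=
  if δ = 0 then s
  else Real.sin (s * δ) / (Real.sin (s * δ) + Real.sin ((1 - s) * δ))

/-- The normalization factor `ñ(t)`. -/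
def ngeo (δ t : ℝ) : ℝ := 1 / (1 - 2 * (t - t^2) * (1 - Real.cos δ))

/-- The Bhattacharya geodesic between `p₀` and `p₁`. -/
def geo (p₀ p₁ : ℝ → ℝ) (s x : ℝ) : ℝ :=
  ngeo (Bh p₀ p₁) (tgeo (Bh p₀ p₁) s) *
    ((1 - tgeo (Bh p₀ p₁) s) * Real.sqrt (p₀ x) + tgeo (Bh p₀ p₁) s * Real.sqrt (p₁ x))^2

lemma He_le_sqrt_two (p₀ p₁ : ℝ → ℝ) (h₀ : memP p₀) (h₁ : memP p₁) :
    He p₀ p₁ ≤ Real.sqrt 2 := by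
  obtain ⟨hm₀, hp₀, hi₀, hn₀⟩ := h₀
  obtain ⟨hm₁, hp₁, hi₁, hn₁⟩ := h₁
  have hg : Integrable (fun x => p₀ x + p₁ x) μΩ := hi₀.add hi₁
  have hfm : AEStronglyMeasurable (fun x => (Real.sqrt (p₁ x) - Real.sqrt (p₀ x))^2) μΩ :=
    (((hm₁.sqrt.sub hm₀.sqrt).pow_const 2)).aestronglyMeasurable
  have hle : ∀ᵐ x ∂μΩ, ‖(Real.sqrt (p₁ x) - Real.sqrt (p₀ x))^2‖ ≤ p₀ x + p₁ x := by
    filter_upwards [hp₀, hp₁] with x hx0 hx1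
    have h0 : Real.sqrt (p₀ x) ^ 2 = p₀ x := Real.sq_sqrt hx0.le
    have h1 : Real.sqrt (p₁ x) ^ 2 = p₁ x := Real.sq_sqrt hx1.le
    rw [Real.norm_eq_abs, abs_of_nonneg (sq_nonneg _)]
    nlinarith [Real.sqrt_nonneg (p₀ x), Real.sqrt_nonneg (p₁ x)]
  have hfi : Integrable (fun x => (Real.sqrt (p₁ x) - Real.sqrt (p₀ x))^2) μΩ :=
    hg.mono' hfm hle
  have hI : (∫ x in Set.Ioo (0:ℝ) 1, (Real.sqrt (p₁ x) - Real.sqrt (p₀ x))^2) ≤ 2 := by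
    have h2 : (∫ x in Set.Ioo (0:ℝ) 1, (Real.sqrt (p₁ x) - Real.sqrt (p₀ x))^2)
        ≤ ∫ x, (p₀ x + p₁ x) ∂μΩ := by
      refine integral_mono_ae hfi hg ?_
      filter_upwards [hle] with x hx
      calc (Real.sqrt (p₁ x) - Real.sqrt (p₀ x))^2
          ≤ ‖(Real.sqrt (p₁ x) - Real.sqrt (p₀ x))^2‖ := le_abs_self _
        _ ≤ p₀ x + p₁ x := hx
    have h3 : (∫ x, (p₀ x + p₁ x) ∂μΩ) = 2 := by
      rw [integral_add hi₀ hi₁]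
      show (∫ x in Set.Ioo (0:ℝ) 1, p₀ x) + (∫ x in Set.Ioo (0:ℝ) 1, p₁ x) = 2
      rw [hn₀, hn₁]; norm_num
    linarith
  calc He p₀ p₁ ≤ Real.sqrt 2 := Real.sqrt_le_sqrt hI

lemma Bh_bounds (p₀ p₁ : ℝ → ℝ) (h₀ : memP p₀) (h₁ : memP p₁) :
    0 ≤ Bh p₀ p₁ ∧ Bh p₀ p₁ ≤ π / 2 ∧ 0 ≤ Real.cos (Bh p₀ p₁) := by
  have hHe0 : 0 ≤ He p₀ p₁ := Real.sqrt_nonneg _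
  have hHe2 : He p₀ p₁ ≤ Real.sqrt 2 := He_le_sqrt_two p₀ p₁ h₀ h₁
  set u := He p₀ p₁ / 2 with hu
  have hu0 : 0 ≤ u := by positivity
  have huu : u ≤ Real.sqrt 2 / 2 := by rw [hu]; linarith
  have harc : Real.arcsin u ≤ π / 4 := by
    have : Real.arcsin (Real.sqrt 2 / 2) = π / 4 := by
      rw [← Real.sin_pi_div_four]
      exact Real.arcsin_sin (by linarith [Real.pi_pos]) (by linarith [Real.pi_pos])
    calc Real.arcsin u ≤ Real.arcsin (Real.sqrt 2 / 2) := Real.monotone_arcsin huu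
      _ = π / 4 := this
  have harc0 : 0 ≤ Real.arcsin u := Real.arcsin_nonneg.2 hu0
  refine ⟨by rw [Bh]; linarith, by rw [Bh]; linarith, ?_⟩
  have hδ : Bh p₀ p₁ = 2 * Real.arcsin u := rfl
  rw [hδ]
  have hle := Real.arcsin_le_pi_div_two u
  exact Real.cos_nonneg_of_mem_Icc ⟨by linarith, by linarith⟩

lemma tgeo_mem (δ s : ℝ) (hδ0 : 0 ≤ δ) (hδπ : δ ≤ π / 2) (hs : s ∈ Set.Icc (0:ℝ) 1) :
    tgeo δ s ∈ Set.Icc (0:ℝ) 1 := by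
  obtain ⟨hs0, hs1⟩ := hs
  rw [tgeo]
  split_ifs with h
  · exact ⟨hs0, hs1⟩
  have hδpos : 0 < δ := lt_of_le_of_ne hδ0 (Ne.symm h)
  have hπ : π / 2 < π := by linarith [Real.pi_pos]
  have hA : 0 ≤ Real.sin (s * δ) :=
    Real.sin_nonneg_of_nonneg_of_le_pi (by positivity) (by nlinarith)
  have hB : 0 ≤ Real.sin ((1 - s) * δ) :=
    Real.sin_nonneg_of_nonneg_of_le_pi (by nlinarith) (by nlinarith)
  have hsum : 0 < Real.sin (s * δ) + Real.sin ((1 - s) * δ) := by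
    rcases eq_or_lt_of_le hs0 with h0 | h0
    · have : Real.sin ((1 - s) * δ) > 0 := by
        apply Real.sin_pos_of_pos_of_lt_pi
        · rw [← h0]; simpa using hδpos
        · rw [← h0]; simpa using lt_of_le_of_lt hδπ hπ
      linarith
    · have : Real.sin (s * δ) > 0 := by
        apply Real.sin_pos_of_pos_of_lt_pi
        · positivity
        · nlinarith
      linarith
  constructor
  · exact div_nonneg hA hsum.le
  · rw [div_le_one hsum]; linarith

lemma algebra_key (t n a b : ℝ) (ht0 : 0 ≤ t) (ht1 : t ≤ 1) (hn1 : 1 ≤ n) (hn2 : n ≤ 2)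
    (ha : 0 ≤ a) (hb : 0 ≤ b) :
    min (a^2) (b^2) ≤ n * ((1-t)*a + t*b)^2 ∧ n * ((1-t)*a + t*b)^2 ≤ 2 * max (a^2) (b^2) := by
  have hc2 : (0:ℝ) ≤ ((1-t)*a + t*b)^2 := sq_nonneg _
  rcases le_total a b with hab | hab
  · have hmin : min (a^2) (b^2) = a^2 := min_eq_left (by nlinarith)
    have hmax : max (a^2) (b^2) = b^2 := max_eq_right (by nlinarith)
    rw [hmin, hmax]
    have hca : a ≤ (1-t)*a + t*b := by nlinarith
    have hcb : (1-t)*a + t*b ≤ b := by nlinarith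
    constructor
    · nlinarith
    · nlinarith
  · have hmin : min (a^2) (b^2) = b^2 := min_eq_right (by nlinarith)
    have hmax : max (a^2) (b^2) = a^2 := max_eq_left (by nlinarith)
    rw [hmin, hmax]
    have hca : b ≤ (1-t)*a + t*b := by nlinarith
    have hcb : (1-t)*a + t*b ≤ a := by nlinarith
    constructor
    · nlinarith
    · nlinarith

lemma ngeo_bounds (δ t : ℝ) (ht0 : 0 ≤ t) (ht1 : t ≤ 1) (hcos : 0 ≤ Real.cos δ) :
    1 ≤ ngeo δ t ∧ ngeo δ t ≤ 2 := by
  have hcos1 : Real.cos δ ≤ 1 := Real.cos_le_one δ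
  have htt0 : 0 ≤ t - t^2 := by nlinarith
  have htt4 : t - t^2 ≤ 1/4 := by nlinarith [sq_nonneg (2*t-1)]
  have hcc0 : 0 ≤ 1 - Real.cos δ := by linarith
  have hcc1 : 1 - Real.cos δ ≤ 1 := by linarith
  have hmul0 : 0 ≤ (t - t^2) * (1 - Real.cos δ) := mul_nonneg htt0 hcc0
  have hmul4 : (t - t^2) * (1 - Real.cos δ) ≤ 1/4 * 1 :=
    mul_le_mul htt4 hcc1 hcc0 (by norm_num)
  have hdpos : 0 < 1 - 2 * (t - t^2) * (1 - Real.cos δ) := by nlinarith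
  constructor
  · rw [ngeo, le_div_iff₀ hdpos]; nlinarith
  · rw [ngeo, div_le_iff₀ hdpos]; nlinarith

/-- Density bounds for Bhattacharya geodesics. -/
theorem bhattacharya_geodesic_density_bounds
    (p₀ p₁ : ℝ → ℝ) (h₀ : memP p₀) (h₁ : memP p₁) :
    ∀ s ∈ Set.Icc (0:ℝ) 1, ∀ᵐ x ∂μΩ,
      min (p₀ x) (p₁ x) ≤ geo p₀ p₁ s x ∧
      geo p₀ p₁ s x ≤ 2 * max (p₀ x) (p₁ x) := by
  obtain ⟨hδ0, hδπ, hcos⟩ := Bh_bounds p₀ p₁ h₀ h₁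
  intro s hs
  obtain ⟨ht0, ht1⟩ := tgeo_mem (Bh p₀ p₁) s hδ0 hδπ hs
  obtain ⟨hn1, hn2⟩ := ngeo_bounds (Bh p₀ p₁) (tgeo (Bh p₀ p₁) s) ht0 ht1 hcos
  filter_upwards [h₀.2.1, h₁.2.1] with x hx0 hx1
  obtain ⟨H1, H2⟩ := algebra_key (tgeo (Bh p₀ p₁) s)
    (ngeo (Bh p₀ p₁) (tgeo (Bh p₀ p₁) s)) (Real.sqrt (p₀ x)) (Real.sqrt (p₁ x))
    ht0 ht1 hn1 hn2 (Real.sqrt_nonneg _) (Real.sqrt_nonneg _)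
  rw [Real.sq_sqrt hx0.le, Real.sq_sqrt hx1.le] at H1 H2
  exact ⟨H1, H2⟩

end
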